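/- A 3×3 Hermitian matrix A is positive definite if and only if a₁₁ + a₂₂ > 0, P₁₂ + P₁₃ + P₂₃ > 0, and det A > 0, where Pᵢⱼ = aᵢᵢaⱼⱼ − |aᵢⱼ|² are the 2×2 principal minors. -/

import Mathlib

open scoped ComplexOrder
open scoped Matrix

private lemma aux_real {x y z u0 u1 u2 : ℝ} (h0 : 0 ≤ u0) (h1 : 0 ≤ u1) (h2 : 0 ≤ u2)
    (h1' : u1 ≤ 1) (h2' : u2 ≤ 1) (hsum : u0 + u1 + u2 = 2)
    (hc : 0 < u0*x + u1*y + u2*z) (hs : 0 < x*y + x*z + y*z) (hd : 0 < x*y*z) :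
    0 < x := by
  by_contra hx
  push_neg at hx
  have hx' : x < 0 := by
    rcases lt_or_eq_of_le hx with h | h
    · exact h
    · rw [h, zero_mul, zero_mul] at hd; exact absurd hd (lt_irrefl 0)
  have hyz : y*z < 0 := by nlinarith
  rcases lt_or_ge y 0 with hy | hy
  · have hz : 0 < z := by nlinarith
    have hz1 : z < -x := by nlinarith
    have hz2 : z < -y := by nlinarith
    nlinarith [mul_nonneg h0 (neg_nonneg.mpr hx'.le), mul_nonneg h1 (neg_nonneg.mpr hy.le),
      mul_le_of_le_one_left hz.le h2']
  · have hy' : 0 < y := lt_of_le_of_ne hy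
      (by rintro rfl; rw [zero_mul] at hyz; exact absurd hyz (lt_irrefl 0))
    have hz : z < 0 := by nlinarith
    have hy1 : y < -x := by nlinarith
    have hy2 : y < -z := by nlinarith
    nlinarith [mul_nonneg h0 (neg_nonneg.mpr hx'.le), mul_nonneg h2 (neg_nonneg.mpr hz.le),
      mul_le_of_le_one_left hy'.le h1']

private lemma diag_re_pos {A : Matrix (Fin 3) (Fin 3) ℂ} (hPD : A.PosDef) (i : Fin 3) :
    0 < (A i i).re := by
  have h := hPD.re_dotProduct_pos (x := Pi.single i 1)
    (fun hh => one_ne_zero (by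
      have h2 := congrFun hh i
      rwa [Pi.single_eq_same, Pi.zero_apply] at h2))
  simpa [dotProduct, Matrix.mulVec, Fin.sum_univ_three, Pi.single_apply] using h

private lemma posdef_of_eig_pos {A : Matrix (Fin 3) (Fin 3) ℂ} (hA : A.IsHermitian)
    (h : ∀ i, 0 < hA.eigenvalues i) : A.PosDef := by
  refine Matrix.PosDef.of_dotProduct_mulVec_pos hA (fun x hx => ?_)
  set U : Matrix (Fin 3) (Fin 3) ℂ := (hA.eigenvectorUnitary : Matrix (Fin 3) (Fin 3) ℂ) with hU
  set D : Matrix (Fin 3) (Fin 3) ℂ := Matrix.diagonal (RCLike.ofReal ∘ hA.eigenvalues) with hD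
  have hUU : U * star U = 1 := Matrix.mem_unitaryGroup_iff.mp hA.eigenvectorUnitary.2
  have hspec : A = U * D * star U := hA.spectral_theorem
  have hDpd : D.PosDef := Matrix.PosDef.diagonal (fun i => by
    simp only [Function.comp_apply]
    exact Complex.zero_lt_real.mpr (h i))
  have hy : star U *ᵥ x ≠ 0 := by
    intro hy0
    apply hx
    have : U *ᵥ (star U *ᵥ x) = x := by
      rw [Matrix.mulVec_mulVec, hUU, Matrix.one_mulVec]
    rw [hy0, Matrix.mulVec_zero] at this
    exact this.symm
  have hstar_y : star (star U *ᵥ x) = star x ᵥ* U := by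
    rw [Matrix.star_mulVec]
    congr 1
    rw [← Matrix.star_eq_conjTranspose, star_star]
  have key : star x ⬝ᵥ A *ᵥ x = star (star U *ᵥ x) ⬝ᵥ D *ᵥ (star U *ᵥ x) :=
    calc star x ⬝ᵥ A *ᵥ x
        = star x ⬝ᵥ ((U * D) *ᵥ (star U *ᵥ x)) := by
          conv_lhs => rw [hspec, ← Matrix.mulVec_mulVec]
      _ = (star x ᵥ* (U * D)) ⬝ᵥ (star U *ᵥ x) := Matrix.dotProduct_mulVec _ _ _
      _ = ((star x ᵥ* U) ᵥ* D) ⬝ᵥ (star U *ᵥ x) := by rw [Matrix.vecMul_vecMul]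
      _ = (star x ᵥ* U) ⬝ᵥ (D *ᵥ (star U *ᵥ x)) := (Matrix.dotProduct_mulVec _ _ _).symm
      _ = star (star U *ᵥ x) ⬝ᵥ (D *ᵥ (star U *ᵥ x)) := by rw [hstar_y]
  rw [key]
  exact hDpd.dotProduct_mulVec_pos hy

private lemma minor_re_pos {A : Matrix (Fin 3) (Fin 3) ℂ} (hPD : A.PosDef) {i j : Fin 3}
    (hij : i ≠ j) : 0 < (A i i).re * (A j j).re - Complex.normSq (A i j) := by
  have hH := hPD.1
  have hp : 0 < (A i i).re := diag_re_pos hPD i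
  have hpr : A i i = ((A i i).re : ℂ) := (Complex.conj_eq_iff_re.mp (hH.apply i i)).symm
  have hqr : A j j = ((A j j).re : ℂ) := (Complex.conj_eq_iff_re.mp (hH.apply j j)).symm
  have hji : A j i = (starRingEnd ℂ) (A i j) := (hH.apply j i).symm
  set v : Fin 3 → ℂ := (-(A i j)) • (Pi.single i 1 : Fin 3 → ℂ) + (A i i) • (Pi.single j 1 : Fin 3 → ℂ) with hv
  have hvj : v j = A i i := by
    simp [hv, Pi.single_apply, hij.symm, Ne.symm hij]
  have hvne : v ≠ 0 := fun h0 => by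
    rw [h0, Pi.zero_apply] at hvj
    rw [← hvj] at hp
    simp at hp
  have h := hPD.re_dotProduct_pos hvne
  have hform : star v ⬝ᵥ A *ᵥ v
      = (((A i i).re * ((A i i).re * (A j j).re - Complex.normSq (A i j)) : ℝ) : ℂ) := by
    rw [hv]
    simp only [Matrix.mulVec_add, Matrix.mulVec_smul, star_add, star_smul,
      add_dotProduct, smul_dotProduct, dotProduct_add,
      dotProduct_smul, Matrix.mulVec_single_one, smul_eq_mul, star_neg]
    simp only [← Pi.single_star, star_one, single_dotProduct, Matrix.col_apply, one_mul]
    rw [hji, hpr, hqr]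
    simp only [mul_one, Complex.star_def, Complex.conj_ofReal, Complex.ofReal_re]
    push_cast [Complex.normSq_eq_conj_mul_self]
    ring
  rw [hform] at h
  simp only [RCLike.re_to_complex, Complex.ofReal_re] at h
  nlinarith [h, hp]

set_option maxHeartbeats 1000000 in
theorem posDef_iff_crit_iv (A : Matrix (Fin 3) (Fin 3) ℂ) (hA : A.IsHermitian) :
    A.PosDef ↔
      (0 < (A 0 0).re + (A 1 1).re ∧ 0 < ((A 0 0).re * (A 1 1).re - Complex.normSq (A 0 1)) + ((A 0 0).re * (A 2 2).re - Complex.normSq (A 0 2)) + ((A 1 1).re * (A 2 2).re - Complex.normSq (A 1 2))) ∧ 0 < A.det.re := by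
  constructor
  · intro hPD
    refine ⟨⟨?_, ?_⟩, ?_⟩
    · have h0 := diag_re_pos hPD 0
      have h1 := diag_re_pos hPD 1
      linarith
    · have h01 := minor_re_pos hPD (i := 0) (j := 1) (by decide)
      have h02 := minor_re_pos hPD (i := 0) (j := 2) (by decide)
      have h12 := minor_re_pos hPD (i := 1) (j := 2) (by decide)
      linarith
    · have h := hPD.det_pos
      have h2 := (Complex.lt_def.mp h).1
      simpa using h2
  · rintro ⟨⟨hc, hs⟩, hd⟩
    apply posdef_of_eig_pos hA
    set U : Matrix (Fin 3) (Fin 3) ℂ := (hA.eigenvectorUnitary : Matrix (Fin 3) (Fin 3) ℂ) with hU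
    set l := hA.eigenvalues with hl
    set D : Matrix (Fin 3) (Fin 3) ℂ := Matrix.diagonal (RCLike.ofReal ∘ l) with hD
    have hUU : U * star U = 1 := Matrix.mem_unitaryGroup_iff.mp hA.eigenvectorUnitary.2
    have hUU' : star U * U = 1 := Matrix.mem_unitaryGroup_iff'.mp hA.eigenvectorUnitary.2
    have hspec : A = U * D * star U := hA.spectral_theorem
    -- abbreviations
    set a := (A 0 0).re with ha
    set b := (A 1 1).re with hb
    set c := (A 2 2).re with hcc
    set n01 := Complex.normSq (A 0 1) with hn01
    set n02 := Complex.normSq (A 0 2) with hn02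
    set n12 := Complex.normSq (A 1 2) with hn12
    -- diagonal entries are real
    have hd0 : A 0 0 = (a : ℂ) := (Complex.conj_eq_iff_re.mp (hA.apply 0 0)).symm
    have hd1 : A 1 1 = (b : ℂ) := (Complex.conj_eq_iff_re.mp (hA.apply 1 1)).symm
    have hd2 : A 2 2 = (c : ℂ) := (Complex.conj_eq_iff_re.mp (hA.apply 2 2)).symm
    -- trace identity
    have htr : A.trace = ((l 0 : ℂ) + l 1 + l 2) := by
      conv_lhs => rw [hspec]
      rw [Matrix.trace_mul_cycle, hUU', one_mul, Matrix.trace_diagonal, Fin.sum_univ_three]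
      simp
    have e1 : a + b + c = l 0 + l 1 + l 2 := by
      rw [Matrix.trace_fin_three, hd0, hd1, hd2] at htr
      exact_mod_cast htr
    -- trace of A^2 identity
    have hA2 : A * A = U * ((D * D) * star U) := by
      conv_lhs => rw [hspec]
      simp only [Matrix.mul_assoc]
      rw [show star U * (U * (D * star U)) = D * star U from by
        rw [← Matrix.mul_assoc, hUU', one_mul]]
    have htr2 : (A * A).trace = ((l 0 : ℂ)^2 + (l 1 : ℂ)^2 + (l 2 : ℂ)^2) := by
      rw [hA2, ← Matrix.mul_assoc, Matrix.trace_mul_cycle, ← Matrix.mul_assoc, hUU', one_mul,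
        hD, Matrix.diagonal_mul_diagonal, Matrix.trace_diagonal, Fin.sum_univ_three]
      simp [sq]
    have e2 : l 0^2 + l 1^2 + l 2^2 = a^2 + b^2 + c^2 + 2*(n01 + n02 + n12) := by
      rw [Matrix.trace_fin_three] at htr2
      simp only [Matrix.mul_apply, Fin.sum_univ_three] at htr2
      rw [← hA.apply 1 0, ← hA.apply 2 0, ← hA.apply 2 1, hd0, hd1, hd2] at htr2
      have htr2' := congrArg Complex.re htr2
      simp only [Complex.add_re, Complex.mul_re, Complex.ofReal_re, Complex.ofReal_im,
        Complex.star_def, Complex.conj_re, Complex.conj_im, ← Complex.ofReal_pow] at htr2'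
      rw [hn01, hn02, hn12]
      simp only [Complex.normSq_apply]
      nlinarith [htr2']
    -- entry (2,2) as convex combination
    have hmc : ∀ (z : ℂ) (r : ℝ), z * (r : ℂ) * star z = ((r * Complex.normSq z : ℝ) : ℂ) := by
      intro z r
      rw [Complex.star_def, mul_comm z, mul_assoc, Complex.mul_conj]
      push_cast
      ring
    set w0 := Complex.normSq (U 2 0) with hw0d
    set w1 := Complex.normSq (U 2 1) with hw1d
    set w2 := Complex.normSq (U 2 2) with hw2d
    have hentry : A 2 2 = U 2 0 * (l 0 : ℂ) * star (U 2 0) + U 2 1 * (l 1 : ℂ) * star (U 2 1)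
        + U 2 2 * (l 2 : ℂ) * star (U 2 2) := by
      conv_lhs => rw [hspec]
      simp [Matrix.mul_apply, Fin.sum_univ_three, Matrix.diagonal, hD, Matrix.star_apply]
    have e3 : c = l 0 * w0 + l 1 * w1 + l 2 * w2 := by
      rw [hd2, hmc, hmc, hmc] at hentry
      exact_mod_cast hentry
    have hrow : U 2 0 * star (U 2 0) + U 2 1 * star (U 2 1) + U 2 2 * star (U 2 2) = 1 := by
      have h22 := congrFun (congrFun hUU 2) 2
      simpa [Matrix.mul_apply, Fin.sum_univ_three, Matrix.star_apply, Matrix.one_apply] using h22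
    have e4 : w0 + w1 + w2 = 1 := by
      simp only [show ∀ z : ℂ, z * star z = (Complex.normSq z : ℂ) from
        fun z => by rw [Complex.star_def]; exact Complex.mul_conj z] at hrow
      exact_mod_cast hrow
    -- determinant
    have e5 : A.det.re = l 0 * l 1 * l 2 := by
      rw [hA.det_eq_prod_eigenvalues, Fin.prod_univ_three]
      push_cast
      simp
      rfl
    -- nonnegativity of weights
    have hw0 : 0 ≤ w0 := Complex.normSq_nonneg _
    have hw1 : 0 ≤ w1 := Complex.normSq_nonneg _
    have hw2 : 0 ≤ w2 := Complex.normSq_nonneg _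
    have hw0' : w0 ≤ 1 := by linarith
    have hw1' : w1 ≤ 1 := by linarith
    have hw2' : w2 ≤ 1 := by linarith
    -- the three real hypotheses
    have hceq : (1-w0)*(l 0) + (1-w1)*(l 1) + (1-w2)*(l 2) = a + b := by
      have := e1
      nlinarith [e1, e3]
    have hc' : 0 < (1-w0)*(l 0) + (1-w1)*(l 1) + (1-w2)*(l 2) := by
      rw [hceq]; exact hc
    have hseq : l 0 * l 1 + l 0 * l 2 + l 1 * l 2
        = (a*b - n01) + (a*c - n02) + (b*c - n12) := by
      linear_combination (-(a+b+c+l 0+l 1+l 2)/2) * e1 + (-1/2 : ℝ) * e2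
    have hs' : 0 < l 0 * l 1 + l 0 * l 2 + l 1 * l 2 := by rw [hseq]; exact hs
    have hd' : 0 < l 0 * l 1 * l 2 := by rw [← e5]; exact hd
    have hu0 : (0:ℝ) ≤ 1 - w0 := by linarith
    have hu1 : (0:ℝ) ≤ 1 - w1 := by linarith
    have hu2 : (0:ℝ) ≤ 1 - w2 := by linarith
    have hsum : (1-w0) + (1-w1) + (1-w2) = 2 := by linarith
    have hl0 : 0 < l 0 := aux_real hu0 hu1 hu2 (by linarith) (by linarith) hsum hc' hs' hd'
    have hl1 : 0 < l 1 := by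
      refine aux_real (x := l 1) (y := l 0) (z := l 2) (u0 := 1-w1) (u1 := 1-w0) (u2 := 1-w2) hu1 hu0 hu2
        (by linarith) (by linarith) (by linarith) (by linarith [hc']) ?_ ?_
      · nlinarith [hs']
      · nlinarith [hd']
    have hl2 : 0 < l 2 := by
      refine aux_real (x := l 2) (y := l 0) (z := l 1) (u0 := 1-w2) (u1 := 1-w0) (u2 := 1-w1) hu2 hu0 hu1
        (by linarith) (by linarith) (by linarith) (by linarith [hc']) ?_ ?_
      · nlinarith [hs']
      · nlinarith [hd']
    intro i
    fin_cases i
    · exact hl0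
    · exact hl1
    · exact hl2
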